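/- Under Assumptions 1–3, 4(i),(ii), Assumption 5' (additive treatments), and the dominance condition O ≥ M almost surely, the average treatment effect is identified as ATE_O(t) = τ · (M̃⁺−M̃⁻)/(Õ⁺−Õ⁻), where τ is the fuzzy difference-in-discontinuities estimand. -/

import Mathlib

open MeasureTheory Filter Topology

/-- Theorem 3b: Under Assumptions 1–3, 4(i),(ii), Assumption 5' (additive
treatments: `Ỹ(1,1)−Ỹ(0,1) = Ỹ(1,0)−Ỹ(0,0)`) and the dominance condition `O ≥ M` a.s., the
average treatment effect is identified as `ATE_O(t) = τ · (M̃⁺−M̃⁻)/(Õ⁺−Õ⁻)`, where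
`τ = (Ỹ⁺−Ỹ⁻)/(T̃⁺−T̃⁻) − (Ȳ⁺−Ȳ⁻)/(M̄⁺−M̄⁻)` is the fuzzy difference-in-discontinuities
estimand.  Conditioning on `X = x` in the young cohort is modeled via conditional laws `ν x ≪ μ`. -/
theorem ate_additive_dominance_identification
    {Ω : Type*} [MeasurableSpace Ω]
    (μ : Measure Ω) [IsProbabilityMeasure μ]
    (ν : ℝ → Measure Ω) [∀ x, IsProbabilityMeasure (ν x)]
    (hν : ∀ x, ν x ≪ μ)
    (O M : Ω → ℝ) (hOmeas : Measurable O) (hMmeas : Measurable M)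
    (hO01 : ∀ ω, O ω = 0 ∨ O ω = 1) (hM01 : ∀ ω, M ω = 0 ∨ M ω = 1)
    -- dominance
    (hdom : ∀ᵐ ω ∂μ, M ω ≤ O ω)
    (t : ℝ)
    (y11 y10 y01 y00 z1 z0 : ℝ → ℝ)
    (EY EO EM ET EYb EMb : ℝ → ℝ)
    (hEO : ∀ x, EO x = ∫ ω, O ω ∂(ν x))
    (hEM : ∀ x, EM x = ∫ ω, M ω ∂(ν x))
    (hET : ∀ x, ET x = ∫ ω, O ω * M ω ∂(ν x))
    -- Assumption 1
    (h11 : ContinuousAt y11 t) (h10 : ContinuousAt y10 t)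
    (h01 : ContinuousAt y01 t) (h00 : ContinuousAt y00 t)
    (hz1 : ContinuousAt z1 t) (hz0 : ContinuousAt z0 t)
    -- Assumption 2 (switching identities)
    (hY : ∀ x, EY x = y00 x + EM x * (y01 x - y00 x) + EO x * (y10 x - y00 x)
        + ET x * (y11 x - y10 x - y01 x + y00 x))
    (hYb : ∀ x, EYb x = z0 x + EMb x * (z1 x - z0 x))
    -- Assumption 3
    (hA3 : z1 t - z0 t = y01 t - y00 t)
    -- Assumption 4 (i), (ii)
    (Op Om Mp Mm Tp Tm Yp Ym Mbp Mbm Ybp Ybm : ℝ)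
    (hOp : Tendsto EO (𝓝[>] t) (𝓝 Op)) (hOm : Tendsto EO (𝓝[<] t) (𝓝 Om))
    (hMp : Tendsto EM (𝓝[>] t) (𝓝 Mp)) (hMm : Tendsto EM (𝓝[<] t) (𝓝 Mm))
    (hTp : Tendsto ET (𝓝[>] t) (𝓝 Tp)) (hTm : Tendsto ET (𝓝[<] t) (𝓝 Tm))
    (hYp : Tendsto EY (𝓝[>] t) (𝓝 Yp)) (hYm : Tendsto EY (𝓝[<] t) (𝓝 Ym))
    (hMbp : Tendsto EMb (𝓝[>] t) (𝓝 Mbp)) (hMbm : Tendsto EMb (𝓝[<] t) (𝓝 Mbm))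
    (hYbp : Tendsto EYb (𝓝[>] t) (𝓝 Ybp)) (hYbm : Tendsto EYb (𝓝[<] t) (𝓝 Ybm))
    (hOne : Op ≠ Om) (hTne : Tp ≠ Tm) (hMbne : Mbp ≠ Mbm)
    -- Assumption 5': additivity
    (hA5' : y11 t - y01 t = y10 t - y00 t) :
    y11 t - y01 t
      = ((Yp - Ym) / (Tp - Tm) - (Ybp - Ybm) / (Mbp - Mbm)) * ((Mp - Mm) / (Op - Om)) := by
  -- dominance ⇒ ET = EM
  have hTM : ∀ x, ET x = EM x := by
    intro x
    rw [hET x, hEM x]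
    refine integral_congr_ae ?_
    have h := (hν x).ae_le hdom
    filter_upwards [h] with ω hω
    rcases hM01 ω with hm | hm
    · simp [hm]
    · rcases hO01 ω with ho | ho
      · exfalso; rw [hm, ho] at hω; linarith
      · simp [hm, ho]
  have hTp' : Tendsto EM (𝓝[>] t) (𝓝 Tp) := (Filter.Tendsto.congr hTM) hTp
  have hTm' : Tendsto EM (𝓝[<] t) (𝓝 Tm) := (Filter.Tendsto.congr hTM) hTm
  have hTpMp : Tp = Mp := tendsto_nhds_unique hTp' hMp
  have hTmMm : Tm = Mm := tendsto_nhds_unique hTm' hMm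
  -- one-sided continuity facts
  have c11p := h11.tendsto.mono_left (nhdsWithin_le_nhds : 𝓝[>] t ≤ 𝓝 t)
  have c10p := h10.tendsto.mono_left (nhdsWithin_le_nhds : 𝓝[>] t ≤ 𝓝 t)
  have c01p := h01.tendsto.mono_left (nhdsWithin_le_nhds : 𝓝[>] t ≤ 𝓝 t)
  have c00p := h00.tendsto.mono_left (nhdsWithin_le_nhds : 𝓝[>] t ≤ 𝓝 t)
  have cz1p := hz1.tendsto.mono_left (nhdsWithin_le_nhds : 𝓝[>] t ≤ 𝓝 t)
  have cz0p := hz0.tendsto.mono_left (nhdsWithin_le_nhds : 𝓝[>] t ≤ 𝓝 t)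
  have c11m := h11.tendsto.mono_left (nhdsWithin_le_nhds : 𝓝[<] t ≤ 𝓝 t)
  have c10m := h10.tendsto.mono_left (nhdsWithin_le_nhds : 𝓝[<] t ≤ 𝓝 t)
  have c01m := h01.tendsto.mono_left (nhdsWithin_le_nhds : 𝓝[<] t ≤ 𝓝 t)
  have c00m := h00.tendsto.mono_left (nhdsWithin_le_nhds : 𝓝[<] t ≤ 𝓝 t)
  have cz1m := hz1.tendsto.mono_left (nhdsWithin_le_nhds : 𝓝[<] t ≤ 𝓝 t)
  have cz0m := hz0.tendsto.mono_left (nhdsWithin_le_nhds : 𝓝[<] t ≤ 𝓝 t)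
  -- limits of EY on both sides
  have hEYp : Tendsto EY (𝓝[>] t)
      (𝓝 (y00 t + Mp * (y01 t - y00 t) + Op * (y10 t - y00 t)
        + Mp * (y11 t - y10 t - y01 t + y00 t))) := by
    have hform : ∀ x, y00 x + EM x * (y01 x - y00 x) + EO x * (y10 x - y00 x)
        + EM x * (y11 x - y10 x - y01 x + y00 x) = EY x := by
      intro x; rw [hY x, hTM x]
    refine Filter.Tendsto.congr hform ?_
    exact ((c00p.add (hMp.mul (c01p.sub c00p))).add (hOp.mul (c10p.sub c00p))).add
      (hMp.mul (((c11p.sub c10p).sub c01p).add c00p))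
  have hEYm : Tendsto EY (𝓝[<] t)
      (𝓝 (y00 t + Mm * (y01 t - y00 t) + Om * (y10 t - y00 t)
        + Mm * (y11 t - y10 t - y01 t + y00 t))) := by
    have hform : ∀ x, y00 x + EM x * (y01 x - y00 x) + EO x * (y10 x - y00 x)
        + EM x * (y11 x - y10 x - y01 x + y00 x) = EY x := by
      intro x; rw [hY x, hTM x]
    refine Filter.Tendsto.congr hform ?_
    exact ((c00m.add (hMm.mul (c01m.sub c00m))).add (hOm.mul (c10m.sub c00m))).add
      (hMm.mul (((c11m.sub c10m).sub c01m).add c00m))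
  have hYpval : Yp = y00 t + Mp * (y01 t - y00 t) + Op * (y10 t - y00 t)
      + Mp * (y11 t - y10 t - y01 t + y00 t) := tendsto_nhds_unique hYp hEYp
  have hYmval : Ym = y00 t + Mm * (y01 t - y00 t) + Om * (y10 t - y00 t)
      + Mm * (y11 t - y10 t - y01 t + y00 t) := tendsto_nhds_unique hYm hEYm
  -- limits of EYb on both sides
  have hEYbp : Tendsto EYb (𝓝[>] t) (𝓝 (z0 t + Mbp * (z1 t - z0 t))) := by
    refine Filter.Tendsto.congr (fun x => (hYb x).symm) ?_
    exact cz0p.add (hMbp.mul (cz1p.sub cz0p))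
  have hEYbm : Tendsto EYb (𝓝[<] t) (𝓝 (z0 t + Mbm * (z1 t - z0 t))) := by
    refine Filter.Tendsto.congr (fun x => (hYb x).symm) ?_
    exact cz0m.add (hMbm.mul (cz1m.sub cz0m))
  have hYbpval : Ybp = z0 t + Mbp * (z1 t - z0 t) := tendsto_nhds_unique hYbp hEYbp
  have hYbmval : Ybm = z0 t + Mbm * (z1 t - z0 t) := tendsto_nhds_unique hYbm hEYbm
  -- nonzero denominators
  have hMne : Mp - Mm ≠ 0 := by
    intro h
    apply hTne
    rw [hTpMp, hTmMm]
    linarith [sub_eq_zero.mp h]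
  have hOne' : Op - Om ≠ 0 := sub_ne_zero.mpr hOne
  have hMbne' : Mbp - Mbm ≠ 0 := sub_ne_zero.mpr hMbne
  -- clean difference identities
  have hYdiff : Yp - Ym = (Mp - Mm) * (y01 t - y00 t) + (Op - Om) * (y11 t - y01 t) := by
    rw [hYpval, hYmval]
    have h5 : y10 t = y11 t - y01 t + y00 t := by linarith
    rw [h5]; ring
  have hYbdiff : Ybp - Ybm = (Mbp - Mbm) * (y01 t - y00 t) := by
    rw [hYbpval, hYbmval, hA3]; ring
  rw [hTpMp, hTmMm, hYdiff, hYbdiff]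
  field_simp
  ring
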